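/- Let Γ = ℤ_{p^∞} ≀ ℤ_{p^∞} be the restricted wreath product of two Prüfer p-groups, with base group Z = ⊕_{b ∈ ℤ_{p^∞}} ℤ_{p^∞}. Identify the base with the group ring module: elements (Σ_b a_b u^b, u^{b₀}). For z = 1/p^i + ℤ in the first copy and y = (p-1)/p^i + ℤ acting, the j-fold Engel bracket [z, _j y] corresponds to (1/p^i)(u^{(p-1)/p^i} − 1)^j in the module ℤ_{p^∞}[ℤ_{p^∞}], and for j < i this element has additive order exactly p^i. -/

import Mathlib

section Wreath

variable (A : Type*) [AddCommGroup A] (B : Type*) [CommGroup B]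

/-- Translation of the index in the restricted direct product `B →₀ A`:
`a·u^c ↦ a·u^{b·c}` (multiplication of the exponent by `b`). -/
def wrShift (b : B) : (B →₀ A) ≃+ (B →₀ A) :=
  Finsupp.domCongr (Equiv.mulLeft b)

/-- The action of `B` on the base group of the wreath product, permuting coordinates. -/
noncomputable def wrPhi : B →* MulAut (Multiplicative (B →₀ A)) where
  toFun b := AddEquiv.toMultiplicative (wrShift A B b⁻¹)
  map_one' := by
    ext f : 1
    show Multiplicative.ofAdd
        (Finsupp.equivMapDomain (Equiv.mulLeft (1 : B)⁻¹) (Multiplicative.toAdd f)) =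
      Multiplicative.ofAdd (Multiplicative.toAdd f)
    refine congrArg Multiplicative.ofAdd (Finsupp.ext fun a => ?_)
    simp only [Finsupp.equivMapDomain_apply, Equiv.mulLeft_symm, Equiv.coe_mulLeft, inv_inv,
      inv_one, one_mul]
  map_mul' b₁ b₂ := by
    ext f : 1
    show Multiplicative.ofAdd
        (Finsupp.equivMapDomain (Equiv.mulLeft (b₁ * b₂)⁻¹) (Multiplicative.toAdd f)) =
      Multiplicative.ofAdd
        (Finsupp.equivMapDomain (Equiv.mulLeft b₁⁻¹)
          (Finsupp.equivMapDomain (Equiv.mulLeft b₂⁻¹) (Multiplicative.toAdd f)))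
    refine congrArg Multiplicative.ofAdd (Finsupp.ext fun a => ?_)
    simp only [Finsupp.equivMapDomain_apply, Equiv.mulLeft_symm, Equiv.coe_mulLeft, inv_inv]
    rw [mul_assoc, mul_left_comm]

/-- The (restricted, regular) wreath product `A ≀ B` of an abelian group `A` (written
additively) and an abelian group `B`: the semidirect product `(⊕_{b ∈ B} A) ⋊ B`. -/
abbrev Wr : Type _ := SemidirectProduct (Multiplicative (B →₀ A)) B (wrPhi A B)

end Wreath


/-- The group ℚ/ℤ. -/
abbrev QZ : Type := ℚ ⧸ AddSubgroup.zmultiples (1 : ℚ)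

/-- The Prüfer `p`-group `ℤ_{p^∞}`, realized as the `p`-primary torsion subgroup of ℚ/ℤ:
elements killed by some power of `p`. -/
def Prufer (p : ℕ) : AddSubgroup QZ where
  carrier := {x | ∃ k : ℕ, (p ^ k : ℕ) • x = 0}
  zero_mem' := ⟨0, smul_zero _⟩
  add_mem' := by
    rintro x y ⟨k, hk⟩ ⟨l, hl⟩
    refine ⟨k + l, ?_⟩
    have h1 : (p ^ (k + l) : ℕ) • x = 0 := by
      rw [pow_add, mul_comm, mul_nsmul', hk, smul_zero]
    have h2 : (p ^ (k + l) : ℕ) • y = 0 := by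
      rw [pow_add, mul_nsmul', hl, smul_zero]
    rw [smul_add, h1, h2, add_zero]
  neg_mem' := by
    rintro x ⟨k, hk⟩
    exact ⟨k, by rw [smul_neg, hk, neg_zero]⟩

/-- The element `m / p^i + ℤ` of the Prüfer `p`-group. -/
def mkP (p : ℕ) (hp : p ≠ 0) (i : ℕ) (m : ℤ) : ↥(Prufer p) :=
  ⟨QuotientAddGroup.mk ((m : ℚ) / (p : ℚ) ^ i), by
    refine ⟨i, ?_⟩
    have hpi : ((p : ℚ) ^ i) ≠ 0 := pow_ne_zero i (Nat.cast_ne_zero.mpr hp)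
    have hq : (p ^ i : ℕ) • ((m : ℚ) / (p : ℚ) ^ i) = (m : ℚ) := by
      rw [nsmul_eq_mul]
      push_cast
      field_simp
    rw [← QuotientAddGroup.mk_nsmul, hq, QuotientAddGroup.eq_zero_iff]
    exact ⟨m, by simp⟩⟩

/-- The commutator `[a,b] = a⁻¹b⁻¹ab`. -/
def br {G : Type*} [Group G] (a b : G) : G := a⁻¹ * b⁻¹ * a * b

/-- The Engel brackets: `engelBr g h 0 = g`, `engelBr g h (n+1) = [engelBr g h n, h]`,
so `engelBr g h j = [g, _j h]`. -/
def engelBr {G : Type*} [Group G] (g h : G) : ℕ → G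
  | 0 => g
  | n + 1 => br (engelBr g h n) h


section Aux

variable {A : Type*} [AddCommGroup A] {B : Type*} [CommGroup B]

lemma wrPhi_ofAdd (b : B) (F : B →₀ A) :
    wrPhi A B b (Multiplicative.ofAdd F) =
      Multiplicative.ofAdd (Finsupp.equivMapDomain (Equiv.mulLeft b⁻¹) F) := rfl

lemma br_base (b : B) (F : B →₀ A) :
    br (⟨Multiplicative.ofAdd F, 1⟩ : Wr A B) ⟨1, b⟩ =
      ⟨Multiplicative.ofAdd (Finsupp.equivMapDomain (Equiv.mulLeft b) F - F), 1⟩ := by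
  refine SemidirectProduct.ext ?_ ?_
  · simp only [br, SemidirectProduct.mul_left, SemidirectProduct.mul_right,
      SemidirectProduct.inv_left, SemidirectProduct.inv_right, inv_one, map_one,
      MulAut.one_apply, mul_one, one_mul, map_inv, one_mul]
    rw [← map_inv (wrPhi A B) b, wrPhi_ofAdd, inv_inv]
    rw [sub_eq_neg_add, ofAdd_add, ofAdd_neg]
  · simp [br]

lemma engel_base (b : B) (F : B →₀ A) (j : ℕ) :
    engelBr (⟨Multiplicative.ofAdd F, 1⟩ : Wr A B) ⟨1, b⟩ j =
      ⟨Multiplicative.ofAdd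
        ((fun f => Finsupp.equivMapDomain (Equiv.mulLeft b) f - f)^[j] F), 1⟩ := by
  induction j with
  | zero => rfl
  | succ n ih =>
    show br (engelBr _ _ n) _ = _
    rw [ih, br_base, Function.iterate_succ_apply']

lemma dsub_apply (b : B) (f : B →₀ A) (c : B) :
    (Finsupp.equivMapDomain (Equiv.mulLeft b) f - f) c = f (b⁻¹ * c) - f c := by
  rw [Finsupp.sub_apply, Finsupp.equivMapDomain_apply]
  simp

lemma iterD_nsmul (b : B) (f : B →₀ A) (n j : ℕ) :
    (fun f => Finsupp.equivMapDomain (Equiv.mulLeft b) f - f)^[j] (n • f)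
      = n • (fun f => Finsupp.equivMapDomain (Equiv.mulLeft b) f - f)^[j] f := by
  induction j generalizing f with
  | zero => rfl
  | succ m ih =>
    rw [Function.iterate_succ_apply', Function.iterate_succ_apply', ih]
    ext c
    simp [dsub_apply, Finsupp.sub_apply, Finsupp.smul_apply, Finsupp.equivMapDomain_apply,
      smul_sub]

lemma iterD_spec (b : B) (a : A) (j : ℕ) (hb : ∀ m : ℕ, 0 < m → m ≤ j → b ^ m ≠ 1) :
    ((fun f => Finsupp.equivMapDomain (Equiv.mulLeft b) f - f)^[j]
        (Finsupp.single 1 a)) 1 = ((-1 : ℤ) ^ j) • a ∧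
      ∀ c, ((fun f => Finsupp.equivMapDomain (Equiv.mulLeft b) f - f)^[j]
          (Finsupp.single 1 a)) c ≠ 0 → ∃ k ≤ j, c = b ^ k := by
  induction j with
  | zero =>
    refine ⟨by simp, fun c hc => ⟨0, le_refl 0, ?_⟩⟩
    by_contra hne
    exact hc (Finsupp.single_eq_of_ne fun h => hne (h ▸ (pow_zero b).symm))
  | succ n ih =>
    obtain ⟨h1, h2⟩ := ih fun m hm hmn => hb m hm (hmn.trans (Nat.le_succ n))
    set g := (fun f => Finsupp.equivMapDomain (Equiv.mulLeft b) f - f)^[n]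
        (Finsupp.single (1 : B) a) with hg
    have hginv : g b⁻¹ = 0 := by
      by_contra h
      obtain ⟨k, hk, hek⟩ := h2 _ h
      exact hb (k + 1) (Nat.succ_pos k) (Nat.succ_le_succ hk)
        (by rw [pow_succ, ← hek, inv_mul_cancel])
    constructor
    · rw [Function.iterate_succ_apply', dsub_apply, ← hg, mul_one, hginv, h1, zero_sub,
        pow_succ, mul_neg_one, neg_smul]
    · intro c hc
      rw [Function.iterate_succ_apply', dsub_apply, ← hg] at hc
      by_cases h : g (b⁻¹ * c) = 0
      · have hcz : g c ≠ 0 := by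
          intro h0; exact hc (by rw [h, h0, sub_zero])
        obtain ⟨k, hk, hek⟩ := h2 _ hcz
        exact ⟨k, hk.trans (Nat.le_succ n), hek⟩
      · obtain ⟨k, hk, hek⟩ := h2 _ h
        refine ⟨k + 1, Nat.succ_le_succ hk, ?_⟩
        rw [pow_succ']
        rw [← hek, mul_inv_cancel_left]

end Aux

lemma mkP_coe (p : ℕ) (hp : p ≠ 0) (i : ℕ) (m : ℤ) :
    ((mkP p hp i m : ↥(Prufer p)) : QZ) =
      QuotientAddGroup.mk ((m : ℚ) / (p : ℚ) ^ i) := rfl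

lemma nsmul_mkP_eq_zero_iff (p : ℕ) (hp : p ≠ 0) (i : ℕ) (m : ℤ) (n : ℕ) :
    n • mkP p hp i m = 0 ↔ ((p : ℤ) ^ i ∣ (n : ℤ) * m) := by
  have hpi : ((p : ℚ) ^ i) ≠ 0 := pow_ne_zero _ (Nat.cast_ne_zero.mpr hp)
  rw [← ZeroMemClass.coe_eq_zero, AddSubgroupClass.coe_nsmul, mkP_coe,
    ← QuotientAddGroup.mk_nsmul, QuotientAddGroup.eq_zero_iff,
    AddSubgroup.mem_zmultiples_iff]
  constructor
  · rintro ⟨z, hz⟩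
    rw [zsmul_eq_mul, mul_one, nsmul_eq_mul] at hz
    refine ⟨z, ?_⟩
    have hq : ((n : ℚ) * m) = (p : ℚ) ^ i * z := by
      rw [hz]
      field_simp
    exact_mod_cast hq
  · rintro ⟨z, hz⟩
    refine ⟨z, ?_⟩
    rw [zsmul_eq_mul, mul_one, nsmul_eq_mul]
    have hq : ((n : ℚ) * m) = (p : ℚ) ^ i * z := by exact_mod_cast hz
    have h2 : (n : ℚ) * ((m : ℚ) / (p : ℚ) ^ i) = ((n : ℚ) * m) / (p : ℚ) ^ i := by ring
    rw [h2, hq, mul_comm, mul_div_assoc, div_self hpi, mul_one]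

/-- in `Γ = ℤ_{p^∞} ≀ ℤ_{p^∞}`, for `z = 1/p^i + ℤ` in the first copy and
`y = (p−1)/p^i + ℤ` acting, the `j`-fold Engel bracket `[z, _j y]` corresponds to the
module element `(1/p^i)·(u^{(p−1)/p^i} − 1)^j` (obtained by applying `f ↦ u^y·f − f`
`j` times to `(1/p^i)·u^0`), and for `j < i` this element has additive order exactly `p^i`. -/
theorem wreath_prufer_engel_order (p : ℕ) (hp : p.Prime) (i : ℕ) (hi : 1 ≤ i) (j : ℕ) :
    engelBr
        (⟨Multiplicative.ofAdd (Finsupp.single 1 (mkP p hp.ne_zero i 1)), 1⟩ :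
          Wr ↥(Prufer p) (Multiplicative ↥(Prufer p)))
        ⟨1, Multiplicative.ofAdd (mkP p hp.ne_zero i ((p : ℤ) - 1))⟩ j =
      ⟨Multiplicative.ofAdd
          ((fun f => Finsupp.equivMapDomain
              (Equiv.mulLeft (Multiplicative.ofAdd (mkP p hp.ne_zero i ((p : ℤ) - 1)))) f
              - f)^[j]
            (Finsupp.single 1 (mkP p hp.ne_zero i 1))),
        1⟩ ∧
      (j < i →
        addOrderOf
          ((fun f => Finsupp.equivMapDomain
              (Equiv.mulLeft (Multiplicative.ofAdd (mkP p hp.ne_zero i ((p : ℤ) - 1)))) f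
              - f)^[j]
            (Finsupp.single 1 (mkP p hp.ne_zero i 1))) = p ^ i) := by
  haveI : Fact p.Prime := ⟨hp⟩
  have hp1 : 1 < p := hp.one_lt
  set x := mkP p hp.ne_zero i ((p : ℤ) - 1) with hx
  set a := mkP p hp.ne_zero i 1 with ha
  set b := Multiplicative.ofAdd x with hbdef
  have hbk : ∀ k : ℕ, b ^ k = 1 → p ^ i ∣ k := by
    intro k hk
    have hk' : k • x = 0 := by
      have h := congrArg Multiplicative.toAdd hk
      rwa [toAdd_pow, toAdd_ofAdd, toAdd_one] at h
    rw [hx, nsmul_mkP_eq_zero_iff] at hk'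
    have hdvd : p ^ i ∣ k * (p - 1) := by
      have h2 : ((p ^ i : ℕ) : ℤ) ∣ ((k * (p - 1) : ℕ) : ℤ) := by
        push_cast [Nat.cast_sub hp1.le]
        exact hk'
      exact_mod_cast h2
    have hcop : Nat.Coprime (p ^ i) (p - 1) := by
      apply Nat.Coprime.pow_left
      show Nat.gcd p (p - 1) = 1
      simp [Nat.gcd_self_sub_right hp1.le]
    exact hcop.dvd_of_dvd_mul_right hdvd
  refine ⟨engel_base b (Finsupp.single 1 a) j, fun hj => ?_⟩
  have hb : ∀ m : ℕ, 0 < m → m ≤ j → b ^ m ≠ 1 := by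
    intro m hm hmj h1
    have hle := Nat.le_of_dvd hm (hbk m h1)
    have hip : i < p ^ i := Nat.lt_pow_self hp1
    omega
  obtain ⟨hval, _hsupp⟩ := iterD_spec b a j hb
  set f := (fun f => Finsupp.equivMapDomain (Equiv.mulLeft b) f - f)^[j]
      (Finsupp.single (1 : Multiplicative ↥(Prufer p)) a) with hf
  have hlow : ¬ (p ^ (i - 1)) • f = 0 := by
    intro h0
    have h1 : (p ^ (i - 1)) • f 1 = 0 := by
      rw [← Finsupp.smul_apply, h0]; simp
    rw [hval, smul_comm] at h1
    have h2 : (p ^ (i - 1)) • a = 0 := by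
      have he : ((-1 : ℤ) ^ j) • ((-1 : ℤ) ^ j) • ((p ^ (i - 1)) • a)
          = (p ^ (i - 1)) • a := by
        rw [smul_smul, ← pow_add, Even.neg_one_pow ⟨j, rfl⟩, one_smul]
      rw [← he, h1, smul_zero]
    rw [ha, nsmul_mkP_eq_zero_iff, mul_one] at h2
    have h3 : p ^ i ∣ p ^ (i - 1) := by exact_mod_cast h2
    have := (Nat.pow_dvd_pow_iff_le_right hp1).mp h3
    omega
  have hhigh : (p ^ i) • f = 0 := by
    rw [hf, ← iterD_nsmul]
    have hs : (p ^ i) • (Finsupp.single (1 : Multiplicative ↥(Prufer p)) a) = 0 := by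
      rw [Finsupp.smul_single]
      have hza : (p ^ i) • a = 0 := by
        rw [ha, nsmul_mkP_eq_zero_iff]
        exact ⟨1, by push_cast; ring⟩
      rw [hza, Finsupp.single_zero]
    rw [hs]
    exact Function.iterate_fixed (by simp) j
  have hi1 : i - 1 + 1 = i := Nat.succ_pred_eq_of_pos hi
  calc addOrderOf f = p ^ (i - 1 + 1) := addOrderOf_eq_prime_pow hlow (by rwa [hi1])
    _ = p ^ i := by rw [hi1]
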